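/- arXiv:2101.01814 — 7 statements merged into one kernel-verified Lean document; each statement's English description precedes it below -/
import Mathlib

section
/- Let κ be a regular uncountable cardinal. Between any two elements q <_{Q_κ} r of Q_κ there exists a strictly increasing sequence of elements of Q_κ of order type κ, all of whose members lie strictly between q and r. -/
universe u

open Cardinal Set

namespace FarTrees

/-- `QSet κ`: the set of functions `f : κ → 2` whose support is non-empty
and has size less than `κ` (the underlying set of the linear order `Q_κ`). -/
def QSet (κ : Cardinal.{u}) : Set (κ.ord.ToType → Bool) :=
  {f | (∃ i, f i = true) ∧ #{i | f i = true} < κ}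

/-- The lexicographic strict order on functions `κ → 2` (with `false < true`). -/
def qlt {κ : Cardinal.{u}} (f g : κ.ord.ToType → Bool) : Prop :=
  ∃ i, (∀ j, j < i → f j = g j) ∧ f i < g i

/-- The corresponding non-strict order. -/
def qle {κ : Cardinal.{u}} (f g : κ.ord.ToType → Bool) : Prop :=
  qlt f g ∨ f = g

/-- `(R, e)` is a Dedekind completion of `Q_κ`: `R` is a (conditionally) complete
dense linear order without endpoints, and `e` is an order embedding of `Q_κ`
into `R` with dense image. -/
def IsDedekindCompletion (κ : Cardinal.{u}) (R : Type u) [LinearOrder R]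
    (e : QSet κ → R) : Prop :=
  (∀ p q : QSet κ, qlt p.1 q.1 ↔ e p < e q) ∧
  (∀ a b : R, a < b → ∃ q : QSet κ, a < e q ∧ e q < b) ∧
  (∀ a : R, ∃ b, b < a) ∧ (∀ a : R, ∃ b, a < b) ∧
  (∀ s : Set R, s.Nonempty → BddAbove s → ∃ a, IsLUB s a)

/-- `A` is unbounded (cofinal) in the ordinal `δ`. -/
def UnbIn (δ : Ordinal.{u}) (A : Set Ordinal.{u}) : Prop :=
  ∀ γ < δ, ∃ β ∈ A, γ ≤ β ∧ β < δ

/-- `β` is a limit point (accumulation point) of the set of ordinals `A`. -/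
def IsAccOf (β : Ordinal.{u}) (A : Set Ordinal.{u}) : Prop :=
  0 < β ∧ ∀ γ < β, ∃ c ∈ A, γ < c ∧ c < β

/-- `C` is a club (closed and unbounded) subset of the ordinal `δ`. -/
def IsClubIn (δ : Ordinal.{u}) (C : Set Ordinal.{u}) : Prop :=
  C ⊆ Iio δ ∧ UnbIn δ C ∧ ∀ β < δ, IsAccOf β C → β ∈ C

/-- `S` is a stationary subset of the ordinal `δ`: it meets every club in `δ`. -/
def IsStationaryIn (δ : Ordinal.{u}) (S : Set Ordinal.{u}) : Prop :=
  ∀ C, IsClubIn δ C → (S ∩ C).Nonempty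

/-- The set of ordinals `A` has order type at most `δ`, i.e. it order-embeds
into `δ` (for well-orders this is equivalent to `type A ≤ δ`). -/
def OtypeLE (A : Set Ordinal.{u}) (δ : Ordinal.{u}) : Prop :=
  ∃ f : A → Ordinal.{u}, (∀ a, f a < δ) ∧ ∀ a b : A, a.1 < b.1 → f a < f b

/-- `κ⁺ ∩ cof(κ)`: the ordinals below `κ⁺` of cofinality `κ`. -/
def cofSet (κ : Cardinal.{u}) : Set Ordinal.{u} :=
  {α | α < (Order.succ κ).ord ∧ α.cof = κ}

/-- The Brodsky–Rinot proxy principle `⊠*_κ(𝒮)`: there is a sequence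
`⟨C_δ : δ < κ⁺⟩`, each `C_δ` a club in `δ` of order type at most `κ`, such that
for every unbounded `X ⊆ κ⁺` and every `S ∈ 𝒮` there are stationarily many
`δ ∈ S` with `(C_δ ∩ X) \ lim(C_δ)` cofinal in `δ`. -/
def Boxtimes (κ : Cardinal.{u}) (𝒮 : Set (Set Ordinal.{u})) : Prop :=
  ∃ Cs : Ordinal.{u} → Set Ordinal.{u},
    (∀ δ < (Order.succ κ).ord, IsClubIn δ (Cs δ) ∧ OtypeLE (Cs δ) κ.ord) ∧
    ∀ X : Set Ordinal.{u}, X ⊆ Iio (Order.succ κ).ord →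
      UnbIn (Order.succ κ).ord X → ∀ S ∈ 𝒮,
      IsStationaryIn (Order.succ κ).ord
        {δ ∈ S | UnbIn δ ((Cs δ ∩ X) \ {β | IsAccOf β (Cs δ)})}

/-- A tree: a strict partial order in which the set of predecessors of every
element is well-ordered. -/
structure Tree' (α : Type u) where
  lt : α → α → Prop
  trans : ∀ {x y z}, lt x y → lt y z → lt x z
  irrefl : ∀ x, ¬ lt x x
  wo : ∀ x : α, IsWellOrder {y // lt y x} (fun a b => lt a.1 b.1)

namespace Tree'

variable {α β : Type u}

/-- The height of a node: the order type of its set of predecessors. -/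
noncomputable def ht (T : Tree' α) (x : α) : Ordinal.{u} :=
  @Ordinal.type {y // T.lt y x} (fun a b => T.lt a.1 b.1) (T.wo x)

/-- Level `δ` of the tree. -/
def level (T : Tree' α) (δ : Ordinal.{u}) : Set α := {x | T.ht x = δ}

/-- `T` is a `λ`-tree: it has height `λ` and all levels of size `< λ`. -/
def IsKTree (T : Tree' α) (lam : Cardinal.{u}) : Prop :=
  (∀ x, T.ht x < lam.ord) ∧ (∀ δ < lam.ord, (T.level δ).Nonempty) ∧
  ∀ δ < lam.ord, #(T.level δ) < lam

/-- A chain: a linearly ordered subset. -/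
def IsChain (T : Tree' α) (c : Set α) : Prop :=
  ∀ x ∈ c, ∀ y ∈ c, x ≠ y → T.lt x y ∨ T.lt y x

/-- An antichain: a set of pairwise incomparable elements. -/
def IsAntichain (T : Tree' α) (A : Set α) : Prop :=
  ∀ x ∈ A, ∀ y ∈ A, x ≠ y → ¬ T.lt x y ∧ ¬ T.lt y x

/-- A branch: a maximal chain. -/
def IsBranch (T : Tree' α) (b : Set α) : Prop :=
  T.IsChain b ∧ ∀ c, T.IsChain c → b ⊆ c → b = c

/-- A cofinal branch of a `λ`-tree: a branch meeting every level below `λ`. -/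
def IsCofinalBranch (T : Tree' α) (lam : Cardinal.{u}) (b : Set α) : Prop :=
  T.IsBranch b ∧ ∀ δ < lam.ord, ∃ x ∈ b, T.ht x = δ

/-- A `λ`-Aronszajn tree: a `λ`-tree with no cofinal branch. -/
def IsAronszajn (T : Tree' α) (lam : Cardinal.{u}) : Prop :=
  T.IsKTree lam ∧ ¬ ∃ b, T.IsCofinalBranch lam b

/-- A Suslin `λ`-tree: a `λ`-tree with no chains or antichains of size `λ`. -/
def IsSuslin (T : Tree' α) (lam : Cardinal.{u}) : Prop :=
  T.IsKTree lam ∧ (∀ c, T.IsChain c → #c < lam) ∧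
    ∀ A, T.IsAntichain A → #A < lam

/-- Normality of a `λ`-tree. -/
def IsNormal (T : Tree' α) (lam : Cardinal.{u}) : Prop :=
  (∀ x, ∀ γ, T.ht x < γ → γ < lam.ord → ∃ y, T.lt x y ∧ T.ht y = γ) ∧
  (∀ x y, x ≠ y → T.ht x = T.ht y → Order.IsSuccLimit (T.ht x) →
    {z | T.lt z x} ≠ {z | T.lt z y}) ∧
  (∀ x, ∃ y z, T.lt x y ∧ T.lt x z ∧ y ≠ z ∧ ¬ T.lt y z ∧ ¬ T.lt z y)

/-- `κ`-completeness: every chain of order type `< κ` has an upper bound. -/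
def IsComplete (T : Tree' α) (κ : Cardinal.{u}) : Prop :=
  ∀ δ : Ordinal.{u}, δ < κ.ord → ∀ s : δ.ToType → α,
    (∀ i j, i < j → T.lt (s i) (s j)) →
    ∃ u, ∀ i, T.lt (s i) u ∨ s i = u

/-- `T` is `L`-embeddable: some map into `L` is strictly increasing on `<_T`. -/
def LEmbeddable (T : Tree' α) (L : Type u) [LT L] : Prop :=
  ∃ f : α → L, ∀ x y, T.lt x y → f x < f y

/-- `T` is special (for a tree of height `μ⁺`): there is a map into `μ`
injective on chains. -/
def IsSpecial (T : Tree' α) (μ : Cardinal.{u}) : Prop :=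
  ∃ g : α → μ.ord.ToType, ∀ x y, T.lt x y → g x ≠ g y

/-- The restriction `T↾S` is special: there is a map from the nodes of height
in `S` into `μ` which is injective on chains. -/
def IsSpecialOn (T : Tree' α) (S : Set Ordinal.{u}) (μ : Cardinal.{u}) : Prop :=
  ∃ g : {x : α // T.ht x ∈ S} → μ.ord.ToType,
    ∀ x y : {x : α // T.ht x ∈ S}, T.lt x.1 y.1 → g x ≠ g y

/-- A downward closed subset of a tree. -/
def DownwardClosed (T : Tree' α) (D : Set α) : Prop :=
  ∀ x ∈ D, ∀ y, T.lt y x → y ∈ D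

end Tree'

/-- A club isomorphism of `T` and `U` on the club `C`: an order isomorphism
between `T↾C` and `U↾C`. -/
def ClubIsoOn {α β : Type u} (T : Tree' α) (U : Tree' β)
    (C : Set Ordinal.{u}) : Prop :=
  ∃ f : {x : α // T.ht x ∈ C} → {y : β // U.ht y ∈ C},
    Function.Bijective f ∧ ∀ x y, T.lt x.1 y.1 ↔ U.lt (f x).1 (f y).1

/-- `T` and `U` are club isomorphic `λ`-trees. -/
def ClubIsomorphic {α β : Type u} (T : Tree' α) (U : Tree' β)
    (lam : Cardinal.{u}) : Prop :=
  ∃ C, IsClubIn lam.ord C ∧ ClubIsoOn T U C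

/-- `T` and `U` are near: they have downward closed subtrees which are club
isomorphic.  (For downward closed subtrees, heights in the subtree agree with
heights in the ambient tree.) -/
def Near {α β : Type u} (T : Tree' α) (U : Tree' β) (lam : Cardinal.{u}) : Prop :=
  ∃ D₁ : Set α, ∃ D₂ : Set β, T.DownwardClosed D₁ ∧ U.DownwardClosed D₂ ∧
    ∃ C, IsClubIn lam.ord C ∧
      ∃ f : {x : α // x ∈ D₁ ∧ T.ht x ∈ C} → {y : β // y ∈ D₂ ∧ U.ht y ∈ C},
        Function.Bijective f ∧ ∀ x y, T.lt x.1 y.1 ↔ U.lt (f x).1 (f y).1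

/-- `T` and `U` are far: they are not near. -/
def Far {α β : Type u} (T : Tree' α) (U : Tree' β) (lam : Cardinal.{u}) : Prop :=
  ¬ Near T U lam


/-- Between any two elements of `Q_κ` there is a strictly increasing sequence
of order type `κ` lying strictly between them. -/
theorem stmt0 (κ : Cardinal.{u}) (hreg : κ.IsRegular) (hunc : ℵ₀ < κ)
    (q r : QSet κ) (hqr : qlt q.1 r.1) :
    ∃ s : κ.ord.ToType → QSet κ,
      (∀ i j : κ.ord.ToType, i < j → qlt (s i).1 (s j).1) ∧
      ∀ i, qlt q.1 (s i).1 ∧ qlt (s i).1 r.1 := by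
  classical
  letI iwo : IsWellOrder κ.ord.ToType (· < ·) := isWellOrder_lt
  obtain ⟨i, hag, hlt⟩ := hqr
  rw [Bool.lt_iff] at hlt
  have hκ0 : ℵ₀ ≤ κ := hunc.le
  -- total cardinality
  have hmk : #κ.ord.ToType = κ := by
    have := Ordinal.card_type ((· < ·) : κ.ord.ToType → κ.ord.ToType → Prop)
    rw [Ordinal.type_toType, Cardinal.card_ord] at this
    exact this.symm
  -- initial segments are small
  have hIic : ∀ x : κ.ord.ToType, #(Set.Iic x) < κ := by
    intro x
    have h1 : #(Set.Iio x) < κ := by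
      have hc : #{y : κ.ord.ToType // y < x} =
          ((Ordinal.typein ((· < ·) : κ.ord.ToType → κ.ord.ToType → Prop)).toRelEmbedding x).card :=
        Ordinal.card_typein x
      have h2 := Ordinal.typein_lt_type ((· < ·) : κ.ord.ToType → κ.ord.ToType → Prop) x
      rw [Ordinal.type_toType] at h2
      have := Cardinal.lt_ord.1 h2
      exact hc ▸ this
    have : #(Set.Iic x) ≤ #(Set.Iio x) + 1 := by
      rw [← Set.Iio_insert]
      exact (Cardinal.mk_insert_le).trans le_rfl
    exact this.trans_lt (Cardinal.add_lt_of_lt hκ0 h1 (one_lt_aleph0.trans hunc))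
  -- the big set
  set Z : Set κ.ord.ToType := {j | i < j ∧ q.1 j = false} with hZdef
  have hZcompl : Zᶜ ⊆ Set.Iic i ∪ {j | q.1 j = true} := by
    intro j hj
    by_cases h1 : j ≤ i
    · exact Or.inl h1
    · right
      simp only [mem_compl_iff, hZdef, mem_setOf_eq, not_and, Bool.not_eq_false] at hj
      exact hj (lt_of_not_ge h1)
  have hZc : #↑Zᶜ < κ := by
    refine (Cardinal.mk_le_mk_of_subset hZcompl).trans_lt ?_
    refine (Cardinal.mk_union_le _ _).trans_lt (Cardinal.add_lt_of_lt hκ0 (hIic i) ?_)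
    exact q.2.2
  have hZbig : κ ≤ #↑Z := by
    by_contra h
    push_neg at h
    have := Cardinal.mk_sum_compl Z
    rw [hmk] at this
    have h3 := Cardinal.add_lt_of_lt hκ0 h hZc
    rw [this] at h3
    exact lt_irrefl κ h3
  -- embed κ into Z
  letI iwoZ : IsWellOrder (Subtype Z) (Subrel (· < ·) Z) :=
    RelEmbedding.isWellOrder (Subrel.relEmbedding _ Z)
  have htype : κ.ord ≤ Ordinal.type (Subrel ((· < ·) : κ.ord.ToType → κ.ord.ToType → Prop) Z) := by
    rw [Cardinal.ord_le, Ordinal.card_type]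
    exact hZbig
  have htype' : Ordinal.type ((· < ·) : κ.ord.ToType → κ.ord.ToType → Prop) ≤
      Ordinal.type (Subrel ((· < ·) : κ.ord.ToType → κ.ord.ToType → Prop) Z) := by
    rw [Ordinal.type_toType]
    exact htype
  obtain ⟨e⟩ := Ordinal.type_le_iff'.1 htype'
  set E : κ.ord.ToType → κ.ord.ToType := fun β => (e β).1 with hEdef
  have hEmono : ∀ {β β'}, β < β' → E β < E β' := fun h => e.map_rel_iff.2 h
  have hEinj : Function.Injective E := by
    intro a b hab
    rcases lt_trichotomy a b with h | h | h
    · exact absurd (hab ▸ hEmono h) (lt_irrefl _)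
    · exact h
    · exact absurd (hab ▸ hEmono h) (lt_irrefl _)
  have hEgt : ∀ β, i < E β := fun β => (e β).2.1
  have hEq : ∀ β, q.1 (E β) = false := fun β => (e β).2.2
  -- the sequence
  set S : κ.ord.ToType → κ.ord.ToType → Bool :=
    fun α j => if ∃ β, β ≤ α ∧ E β = j then true else q.1 j with hSdef
  have hSq : ∀ α j, (∀ β, β ≤ α → E β ≠ j) → S α j = q.1 j := by
    intro α j h
    rw [hSdef]
    simp only
    rw [if_neg]
    rintro ⟨β, hβ, hE⟩
    exact h β hβ hE
  have hStrue : ∀ α β, β ≤ α → S α (E β) = true := by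
    intro α β h
    rw [hSdef]
    simp only
    rw [if_pos ⟨β, h, rfl⟩]
  have hSfalse : ∀ α β, α < β → S α (E β) = false := by
    intro α β h
    rw [hSq α (E β) ?_, hEq]
    intro γ hγ hEγ
    exact absurd ((hEinj hEγ) ▸ hγ) (not_le.2 h)
  have hmem : ∀ α, S α ∈ QSet κ := by
    intro α
    constructor
    · exact ⟨E α, hStrue α α le_rfl⟩
    · have hsub : {j | S α j = true} ⊆ {j | q.1 j = true} ∪ (E '' Set.Iic α) := by
        intro j hj
        simp only [mem_setOf_eq, hSdef] at hj
        by_cases h : ∃ β, β ≤ α ∧ E β = j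
        · obtain ⟨β, hβ, hE⟩ := h
          exact Or.inr ⟨β, hβ, hE⟩
        · rw [if_neg h] at hj
          exact Or.inl hj
      refine (Cardinal.mk_le_mk_of_subset hsub).trans_lt ?_
      refine (Cardinal.mk_union_le _ _).trans_lt (Cardinal.add_lt_of_lt hκ0 q.2.2 ?_)
      exact (Cardinal.mk_image_le).trans_lt (hIic α)
  refine ⟨fun α => ⟨S α, hmem α⟩, ?_, ?_⟩
  · -- strictly increasing
    intro α α' hαα'
    have hne : {β | α < β}.Nonempty := ⟨α', hαα'⟩
    set βs := iwo.wf.min {β | α < β} hne with hβs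
    have hαβs : α < βs := iwo.wf.min_mem _ hne
    have hβsα' : βs ≤ α' := not_lt.1 (iwo.wf.not_lt_min _ hαα')
    refine ⟨E βs, ?_, ?_⟩
    · intro j hj
      by_cases h : ∃ β, β ≤ α' ∧ E β = j
      · obtain ⟨β, hβ, hE⟩ := h
        have hββs : β < βs := by
          have := hE ▸ hj
          by_contra hc
          push_neg at hc
          rcases eq_or_lt_of_le hc with h1 | h1
          · exact absurd (h1 ▸ this) (lt_irrefl _)
          · exact absurd (this.trans (hEmono h1)) (lt_irrefl _)
        have hβα : β ≤ α := not_lt.1 (fun hc => iwo.wf.not_lt_min _ hc hββs)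
        show S α j = S α' j
        rw [← hE, hStrue α β hβα, hStrue α' β hβ]
      · have hα : ∀ β, β ≤ α → E β ≠ j := fun β hβ hE => h ⟨β, hβ.trans hαα'.le, hE⟩
        have hα' : ∀ β, β ≤ α' → E β ≠ j := fun β hβ hE => h ⟨β, hβ, hE⟩
        show S α j = S α' j
        rw [hSq α j hα, hSq α' j hα']
    · show S α (E βs) < S α' (E βs)
      rw [hSfalse α βs hαβs, hStrue α' βs hβsα']
      exact Bool.lt_iff.2 ⟨rfl, rfl⟩
  · intro α
    constructor
    · -- q < s α
      have hne : (Set.univ : Set κ.ord.ToType).Nonempty := ⟨α, trivial⟩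
      set βm := iwo.wf.min Set.univ hne with hβm
      have hβmα : βm ≤ α := not_lt.1 (iwo.wf.not_lt_min _ (mem_univ α))
      refine ⟨E βm, ?_, ?_⟩
      · intro j hj
        show q.1 j = S α j
        refine (hSq α j ?_).symm
        intro β hβ hE
        have : E β < E βm := hE ▸ hj
        have hββm : β < βm := by
          by_contra hc
          push_neg at hc
          rcases eq_or_lt_of_le hc with h1 | h1
          · exact absurd (h1 ▸ this) (lt_irrefl _)
          · exact absurd (this.trans (hEmono h1)) (lt_irrefl _)
        exact iwo.wf.not_lt_min _ (mem_univ β) hββm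
      · show q.1 (E βm) < S α (E βm)
        rw [hEq βm, hStrue α βm hβmα]
        exact Bool.lt_iff.2 ⟨rfl, rfl⟩
    · -- s α < r
      refine ⟨i, ?_, ?_⟩
      · intro j hj
        show S α j = r.1 j
        rw [hSq α j (fun β _ hE => absurd (hE ▸ hEgt β) (not_lt.2 hj.le)), hag j hj]
      · show S α i < r.1 i
        rw [hSq α i (fun β _ hE => absurd (hE ▸ hEgt β) (lt_irrefl i)), hlt.1, hlt.2]
        exact Bool.lt_iff.2 ⟨rfl, rfl⟩


end FarTrees
end

section
/- Let κ be a regular uncountable cardinal. Between any two elements q <_{R_κ} r of R_κ there exists a strictly increasing sequence of elements of R_κ of order type κ, all of whose members lie strictly between q and r. -/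
universe u

open Cardinal Set

namespace FarTrees

/-- Between any two elements of `R_κ` there is a strictly increasing sequence
of order type `κ` lying strictly between them. -/
theorem stmt3 (κ : Cardinal.{u}) (hreg : κ.IsRegular) (hunc : ℵ₀ < κ)
    (R : Type u) [LinearOrder R] (e : QSet κ → R)
    (hRe : IsDedekindCompletion κ R e) (a b : R) (hab : a < b) :
    ∃ s : κ.ord.ToType → R, StrictMono s ∧ ∀ i, a < s i ∧ s i < b := by
  classical
  haveI : IsWellOrder κ.ord.ToType (· < ·) := isWellOrder_lt
  obtain ⟨hemb, hdense, -, -, -⟩ := hRe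
  obtain ⟨p, hap, hpb⟩ := hdense a b hab
  obtain ⟨q, hpq, hqb⟩ := hdense (e p) b hpb
  rw [← hemb] at hpq
  obtain ⟨i₀, hagr, hi₀⟩ := hpq
  rw [Bool.lt_iff] at hi₀
  have hκord := Ordinal.type_toType κ.ord
  set τ : κ.ord.ToType → Ordinal.{u} := fun x => Ordinal.typein (α := κ.ord.ToType) (· < ·) x with hτ
  have hτlt : ∀ x, τ x < κ.ord := fun x => hκord ▸ Ordinal.typein_lt_type (α := κ.ord.ToType) (· < ·) x
  have hτmono : ∀ {x y : κ.ord.ToType}, τ x < τ y ↔ x < y := fun {x y} =>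
    Ordinal.typein_lt_typein (α := κ.ord.ToType) (· < ·)
  have hκlim := Cardinal.isSuccLimit_ord hreg.aleph0_le
  have hsucc : ∀ x : κ.ord.ToType, τ x + 1 < κ.ord := fun x => by
    rw [Ordinal.add_one_eq_succ]; exact hκlim.succ_lt (hτlt x)
  -- the bound σ
  set σ₀ : Ordinal.{u} := ⨆ x : {i : κ.ord.ToType | p.1 i = true}, τ x.1 + 1 with hσ₀def
  have hσ₀ : σ₀ < κ.ord := by
    apply Ordinal.iSup_lt_ord
    · rw [hreg.cof_eq]; exact p.2.2
    · exact fun x => hsucc x.1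
  set σ : Ordinal.{u} := max σ₀ (τ i₀ + 1) with hσdef
  have hσ : σ < κ.ord := max_lt hσ₀ (hsucc i₀)
  have hadd : ∀ γ : κ.ord.ToType, σ + τ γ < κ.ord := by
    intro γ
    rw [Cardinal.lt_ord, Ordinal.card_add]
    exact Cardinal.add_lt_of_lt hreg.aleph0_le (Cardinal.lt_ord.1 hσ)
      (Cardinal.lt_ord.1 (hτlt γ))
  -- the sequence of positions
  set t : κ.ord.ToType → κ.ord.ToType := fun γ =>
    Ordinal.enum (α := κ.ord.ToType) (· < ·) ⟨σ + τ γ, by rw [hκord]; exact hadd γ⟩ with htdef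
  have hτt : ∀ γ, τ (t γ) = σ + τ γ := fun γ => Ordinal.typein_enum _ _
  have htmono : ∀ {γ γ' : κ.ord.ToType}, t γ < t γ' ↔ γ < γ' := by
    intro γ γ'
    rw [← hτmono, hτt, hτt, add_lt_add_iff_left, hτmono]
  have htinj : Function.Injective t := fun γ γ' h => by
    rcases lt_trichotomy γ γ' with h' | h' | h'
    · exact absurd (htmono.2 h') (by rw [h]; exact lt_irrefl _)
    · exact h'
    · exact absurd (htmono.2 h') (by rw [h]; exact lt_irrefl _)
  have hti₀ : ∀ γ, i₀ < t γ := by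
    intro γ
    rw [← hτmono, hτt]
    calc τ i₀ < τ i₀ + 1 := lt_add_one _
      _ ≤ σ := le_max_right _ _
      _ ≤ σ + τ γ := le_self_add
  have htp : ∀ γ, p.1 (t γ) = false := by
    intro γ
    by_contra h
    have h' : p.1 (t γ) = true := by
      cases hb : p.1 (t γ) with
      | false => exact absurd hb h
      | true => rfl
    have h1 : τ (t γ) + 1 ≤ σ₀ :=
      Ordinal.le_iSup (fun x : {i : κ.ord.ToType | p.1 i = true} => τ x.1 + 1) ⟨t γ, h'⟩
    have h2 : σ₀ ≤ τ (t γ) := by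
      rw [hτt]
      exact le_trans (le_max_left _ _) (le_self_add)
    exact absurd (h1.trans h2) (not_le.2 (lt_add_one _))
  -- the functions
  set F : κ.ord.ToType → κ.ord.ToType → Bool := fun β α => p.1 α || decide (∃ γ, γ < β ∧ t γ = α) with hFdef
  have hFmem : ∀ β, F β ∈ QSet κ := by
    intro β
    constructor
    · obtain ⟨i, hi⟩ := p.2.1
      exact ⟨i, by simp [hFdef, hi]⟩
    · have hsub : {α | F β α = true} ⊆ {α | p.1 α = true} ∪ (t '' {γ | γ < β}) := by
        intro α hα
        simp only [hFdef, Bool.or_eq_true, decide_eq_true_eq] at hα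
        rcases hα with h | ⟨γ, hγ, hγα⟩
        · exact Or.inl h
        · exact Or.inr ⟨γ, hγ, hγα⟩
      calc #{α | F β α = true} ≤ #({α | p.1 α = true} ∪ (t '' {γ | γ < β}) : Set κ.ord.ToType) :=
            Cardinal.mk_le_mk_of_subset hsub
        _ ≤ #{α | p.1 α = true} + #(t '' {γ | γ < β}) := Cardinal.mk_union_le _ _
        _ ≤ #{α | p.1 α = true} + #{γ : κ.ord.ToType | γ < β} := by
            gcongr; exact Cardinal.mk_image_le
        _ < κ := by
            apply Cardinal.add_lt_of_lt hreg.aleph0_le p.2.2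
            have hcard : #{γ : κ.ord.ToType | γ < β} = (τ β).card :=
              (Ordinal.card_typein
                (r := ((· < ·) : κ.ord.ToType → κ.ord.ToType → Prop)) β).symm
            rw [hcard]
            exact Cardinal.lt_ord.1 (hτlt β)
  set fq : κ.ord.ToType → QSet κ := fun β => ⟨F β, hFmem β⟩ with hfqdef
  refine ⟨fun β => e (fq β), ?_, ?_⟩
  · -- strict monotonicity
    intro β β' hββ'
    apply (hemb _ _).1
    refine ⟨t β, ?_, ?_⟩
    · intro j hj
      show F β j = F β' j
      simp only [hFdef]
      congr 1
      rw [decide_eq_decide]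
      constructor
      · rintro ⟨γ, hγ, rfl⟩; exact ⟨γ, hγ.trans hββ', rfl⟩
      · rintro ⟨γ, hγ, rfl⟩
        exact ⟨γ, htmono.1 hj, rfl⟩
    · have h1 : F β (t β) = false := by
        simp only [hFdef, htp β, Bool.false_or, decide_eq_false_iff_not]
        rintro ⟨γ, hγ, hγβ⟩
        exact absurd (htinj hγβ) (ne_of_lt hγ)
      have h2 : F β' (t β) = true := by
        simp only [hFdef, Bool.or_eq_true, decide_eq_true_eq]
        exact Or.inr ⟨β, hββ', rfl⟩
      show F β (t β) < F β' (t β)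
      rw [h1, h2]; exact Bool.lt_iff.2 ⟨rfl, rfl⟩
  · intro β
    constructor
    · -- a < s β
      have hle : e p ≤ e (fq β) := by
        by_cases hex : ∃ γ : κ.ord.ToType, γ < β
        · have hwf : ({γ : κ.ord.ToType | γ < β}).Nonempty := hex
          set γ₀ : κ.ord.ToType := (IsWellFounded.wf (α := κ.ord.ToType) (r := (· < ·))).min _ hwf with hγ₀def
          have hγ₀mem : γ₀ < β := (IsWellFounded.wf (α := κ.ord.ToType) (r := (· < ·))).min_mem _ hwf
          have hγ₀min : ∀ γ : κ.ord.ToType, γ < β → ¬ γ < γ₀ := fun γ hγ =>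
            (IsWellFounded.wf (α := κ.ord.ToType) (r := (· < ·))).not_lt_min {γ : κ.ord.ToType | γ < β} hγ
          have : qlt p.1 (fq β).1 := by
            refine ⟨t γ₀, ?_, ?_⟩
            · intro j hj
              simp only [hfqdef, hFdef]
              have : decide (∃ γ, γ < β ∧ t γ = j) = false := by
                rw [decide_eq_false_iff_not]
                rintro ⟨γ, hγ, rfl⟩
                exact hγ₀min γ hγ (htmono.1 hj)
              rw [this, Bool.or_false]
            · have h2 : (fq β).1 (t γ₀) = true := by
                simp only [hfqdef, hFdef, Bool.or_eq_true, decide_eq_true_eq]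
                exact Or.inr ⟨γ₀, hγ₀mem, rfl⟩
              show p.1 (t γ₀) < (fq β).1 (t γ₀)
              rw [h2, htp γ₀]
              exact Bool.lt_iff.2 ⟨rfl, rfl⟩
          exact le_of_lt ((hemb _ _).1 this)
        · have : fq β = p := by
            apply Subtype.ext
            funext α
            simp only [hfqdef, hFdef]
            have : decide (∃ γ, γ < β ∧ t γ = α) = false := by
              rw [decide_eq_false_iff_not]
              rintro ⟨γ, hγ, -⟩
              exact hex ⟨γ, hγ⟩
            rw [this, Bool.or_false]
          rw [this]
      exact lt_of_lt_of_le hap hle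
    · -- s β < b
      have : qlt (fq β).1 q.1 := by
        refine ⟨i₀, ?_, ?_⟩
        · intro j hj
          have : decide (∃ γ, γ < β ∧ t γ = j) = false := by
            rw [decide_eq_false_iff_not]
            rintro ⟨γ, -, rfl⟩
            exact absurd (hj.trans (hti₀ γ)) (lt_irrefl _)
          simp only [hfqdef, hFdef, this, Bool.or_false]
          exact hagr j hj
        · have h1 : (fq β).1 i₀ = false := by
            have : decide (∃ γ, γ < β ∧ t γ = i₀) = false := by
              rw [decide_eq_false_iff_not]
              rintro ⟨γ, -, h⟩
              exact absurd ((hti₀ γ).trans_eq h) (lt_irrefl _)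
            simp only [hfqdef, hFdef, this, Bool.or_false, hi₀.1]
          show (fq β).1 i₀ < q.1 i₀
          rw [h1, hi₀.2]
          exact Bool.lt_iff.2 ⟨rfl, rfl⟩
      exact lt_trans ((hemb _ _).1 this) hqb

end FarTrees
end

section
/- Let κ be a regular uncountable cardinal. Every strictly increasing sequence of elements of R_κ whose order type is a limit ordinal less than κ has a least upper bound in R_κ, and this least upper bound belongs to Q_κ. -/
universe u

open Cardinal Set

namespace FarTrees

section Key

variable {κ : Cardinal.{u}}

/-- The witness property: `d` is the first point of difference of `f < g`. -/
def Wit (f g : κ.ord.ToType → Bool) (d : κ.ord.ToType) : Prop :=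
  (∀ b, b < d → f b = g b) ∧ f d = false ∧ g d = true

theorem qlt_iff_wit {f g : κ.ord.ToType → Bool} : qlt f g ↔ ∃ d, Wit f g d := by
  unfold qlt Wit
  refine exists_congr fun d => and_congr_right fun _ => ?_
  rw [Bool.lt_iff]

theorem key (hreg : κ.IsRegular) {ι : Type u} [LinearOrder ι]
    [Nonempty ι] [NoMaxOrder ι] (hcard : #ι < κ)
    (Q : ι → QSet κ) (hQ : ∀ i j : ι, i < j → qlt (Q i).1 (Q j).1) :
    ∃ q : QSet κ, (∀ i, qlt (Q i).1 q.1) ∧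
      ∀ p : QSet κ, qlt p.1 q.1 → ∃ i, qlt p.1 (Q i).1 := by
  classical
  -- the set of first-difference points above `i`
  set S : ι → Set (κ.ord.ToType) :=
    fun i => {d | ∃ j, i < j ∧ Wit (Q i).1 (Q j).1 d} with hS
  have hSne : ∀ i, (S i).Nonempty := by
    intro i
    obtain ⟨j, hij⟩ := exists_gt i
    obtain ⟨d, hd⟩ := qlt_iff_wit.1 (hQ i j hij)
    exact ⟨d, j, hij, hd⟩
  set E : ι → κ.ord.ToType :=
    fun i => (IsWellFounded.wf (r := ((· < ·) : κ.ord.ToType → κ.ord.ToType → Prop))).min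
      (S i) (hSne i) with hE
  have hEmem : ∀ i, E i ∈ S i := fun i => WellFounded.min_mem _ _ _
  have hEmin : ∀ i, ∀ d ∈ S i, E i ≤ d := by
    intro i d hd
    exact not_lt.1 (WellFounded.not_lt_min _ _ hd)
  -- F1 : agreement below E i
  have F1 : ∀ i j : ι, i < j → ∀ α, α < E i → (Q i).1 α = (Q j).1 α := by
    intro i j hij α hα
    obtain ⟨d, hd⟩ := qlt_iff_wit.1 (hQ i j hij)
    have : E i ≤ d := hEmin i d ⟨j, hij, hd⟩
    exact hd.1 α (lt_of_lt_of_le hα this)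
  have W : ∀ a b : ι, ∀ α, α < E a → α < E b → (Q a).1 α = (Q b).1 α := by
    intro a b α ha hb
    rcases lt_trichotomy a b with h | rfl | h
    · exact F1 a b h α ha
    · rfl
    · exact (F1 b a h α hb).symm
  -- F3 : E is unbounded-increasing, with witnesses
  have F3 : ∀ i, ∃ j, i < j ∧ E i < E j ∧ Wit (Q i).1 (Q j).1 (E i) := by
    intro i
    obtain ⟨j, hij, wj⟩ := hEmem i
    refine ⟨j, hij, ?_, wj⟩
    by_contra hle
    push_neg at hle
    obtain ⟨k, hjk, wk⟩ := hEmem j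
    rcases lt_or_eq_of_le hle with hlt | heq
    · -- E j < E i : then E j ∈ S i, contradicting minimality
      have hwik : Wit (Q i).1 (Q k).1 (E j) := by
        refine ⟨fun b hb => (wj.1 b (hb.trans hlt)).trans (wk.1 b hb), ?_, wk.2.2⟩
        rw [wj.1 (E j) hlt]; exact wk.2.1
      have := hEmin i (E j) ⟨k, hij.trans hjk, hwik⟩
      exact absurd hlt (not_lt.2 this)
    · -- E j = E i : (Q j) (E j) is both false and true
      have h1 : (Q j).1 (E j) = false := wk.2.1
      rw [heq, wj.2.2] at h1
      simp at h1
  -- the candidate supremum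
  set q : κ.ord.ToType → Bool :=
    fun α => if h : ∃ i, α < E i then (Q h.choose).1 α else false with hq
  have q1 : ∀ α, ∀ a : ι, α < E a → q α = (Q a).1 α := by
    intro α a ha
    have h : ∃ i, α < E i := ⟨a, ha⟩
    rw [hq]
    simp only [dif_pos h]
    exact W _ _ _ h.choose_spec ha
  have hqE : ∀ i, q (E i) = true := by
    intro i
    obtain ⟨j, hij, hEij, wj⟩ := F3 i
    rw [q1 (E i) j hEij]
    exact wj.2.2
  -- q is a member of QSet κ
  have hqmem : q ∈ QSet κ := by
    constructor
    · exact ⟨E (Classical.arbitrary ι), hqE _⟩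
    · have hsub : {α | q α = true} ⊆ ⋃ i, {α | (Q i).1 α = true} := by
        intro α hα
        by_cases h : ∃ i, α < E i
        · have : q α = (Q h.choose).1 α := by rw [hq]; simp only [dif_pos h]
          refine Set.mem_iUnion.2 ⟨h.choose, ?_⟩
          simp only [Set.mem_setOf_eq] at hα ⊢
          rw [← this]; exact hα
        · have : q α = false := by rw [hq]; simp only [dif_neg h]
          rw [Set.mem_setOf_eq, this] at hα
          exact absurd hα Bool.false_ne_true
      calc #{α | q α = true} ≤ #(⋃ i, {α | (Q i).1 α = true}) := mk_le_mk_of_subset hsub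
        _ ≤ Cardinal.sum fun i => #{α | (Q i).1 α = true} := mk_iUnion_le_sum_mk
        _ < κ := Cardinal.sum_lt_of_isRegular hreg hcard fun i => (Q i).2.2
  refine ⟨⟨q, hqmem⟩, ?_, ?_⟩
  · -- q is an upper bound
    intro i
    obtain ⟨j, hij, hEij, wj⟩ := F3 i
    refine qlt_iff_wit.2 ⟨E i, fun b hb => (q1 b i hb).symm, wj.2.1, hqE i⟩
  · -- q is the least upper bound, strongly
    rintro p hp
    obtain ⟨d, hagree', hfd, hgd'⟩ := qlt_iff_wit.1 hp
    have hagree : ∀ b, b < d → p.1 b = q b := hagree'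
    have hgd : q d = true := hgd'
    have h : ∃ i, d < E i := by
      by_contra h
      have h2 : q d = false := by rw [hq]; simp only [dif_neg h]
      rw [h2] at hgd
      exact Bool.false_ne_true hgd
    obtain ⟨i, hi⟩ := h
    refine ⟨i, qlt_iff_wit.2 ⟨d, fun b hb => (hagree b hb).trans (q1 b i (hb.trans hi)), hfd, ?_⟩⟩
    rw [← q1 d i hi]
    exact hgd

end Key

/-- Every strictly increasing sequence in `R_κ` whose order type is a limit
ordinal less than `κ` has a least upper bound, and this bound lies in `Q_κ`. -/
theorem stmt4 (κ : Cardinal.{u}) (hreg : κ.IsRegular) (hunc : ℵ₀ < κ)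
    (R : Type u) [LinearOrder R] (e : QSet κ → R)
    (hRe : IsDedekindCompletion κ R e)
    (δ : Ordinal.{u}) (hlim : Order.IsSuccLimit δ) (hδ : δ < κ.ord)
    (s : δ.ToType → R) (hs : StrictMono s) :
    ∃ x : R, IsLUB (Set.range s) x ∧ x ∈ Set.range e := by
  classical
  haveI : Nonempty δ.ToType := Ordinal.nonempty_toType_iff.2 hlim.pos.ne'
  set φ := Ordinal.ToType.mk (o := δ) with hφ
  set nxt : δ.ToType → δ.ToType :=
    fun i => φ ⟨Order.succ (φ.symm i).1, Set.mem_Iio.2 (hlim.succ_lt (Set.mem_Iio.1 (φ.symm i).2))⟩ with hnxt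
  have hnxt1 : ∀ i, i < nxt i := by
    intro i
    conv_lhs => rw [← φ.apply_symm_apply i]
    rw [φ.lt_iff_lt, ← Subtype.coe_lt_coe]
    exact Order.lt_succ _
  have hnxt2 : ∀ i j, i < j → nxt i ≤ j := by
    intro i j hij
    conv_rhs => rw [← φ.apply_symm_apply j]
    rw [φ.le_iff_le]
    have h2 : (φ.symm i) < (φ.symm j) := by rwa [φ.symm.lt_iff_lt]
    rw [← Subtype.coe_le_coe]
    exact Order.succ_le_of_lt (Subtype.coe_lt_coe.2 h2)
  haveI : NoMaxOrder δ.ToType := ⟨fun i => ⟨nxt i, hnxt1 i⟩⟩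
  -- pick elements of Q between s i and s (nxt i)
  have hdense := hRe.2.1
  set Q : δ.ToType → QSet κ :=
    fun i => (hdense (s i) (s (nxt i)) (hs (hnxt1 i))).choose with hQdef
  have hQspec : ∀ i, s i < e (Q i) ∧ e (Q i) < s (nxt i) :=
    fun i => (hdense (s i) (s (nxt i)) (hs (hnxt1 i))).choose_spec
  have hQmono : ∀ i j : δ.ToType, i < j → qlt (Q i).1 (Q j).1 := by
    intro i j hij
    refine (hRe.1 (Q i) (Q j)).2 ?_
    calc e (Q i) < s (nxt i) := (hQspec i).2
      _ ≤ s j := hs.monotone (hnxt2 i j hij)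
      _ < e (Q j) := (hQspec j).1
  have hcard : #δ.ToType < κ := by
    rw [Cardinal.mk_toType]
    exact Cardinal.lt_ord.1 hδ
  obtain ⟨q, hub, hmin⟩ := key hreg hcard Q hQmono
  refine ⟨e q, ⟨?_, ?_⟩, q, rfl⟩
  · rintro _ ⟨i, rfl⟩
    exact le_of_lt ((hQspec i).1.trans ((hRe.1 (Q i) q).1 (hub i)))
  · intro r hr
    by_contra hlt
    push_neg at hlt
    obtain ⟨p, hrp, hpq⟩ := hdense r (e q) hlt
    obtain ⟨i, hpi⟩ := hmin p ((hRe.1 p q).2 hpq)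
    have h1 : e p < e (Q i) := (hRe.1 p (Q i)).1 hpi
    have h2 : s (nxt i) ≤ r := hr (Set.mem_range_self (nxt i))
    exact absurd (hrp.trans (h1.trans ((hQspec i).2.trans_le h2))) (lt_irrefl r)


end FarTrees
end

section
/- Let λ be a regular uncountable cardinal and assume that T and U are club isomorphic λ-trees. If A ⊆ U is an antichain such that S := {ht_U(x) : x ∈ A} is a stationary subset of λ, then there exist a club C ⊆ λ and an antichain B ⊆ T such that {ht_T(y) : y ∈ B} = S ∩ C. -/
universe u

open Cardinal Set

namespace FarTrees

section AuxStmt9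

variable {α : Type u}

theorem aux_ht_eq_typein (T : Tree' α) {x y : α} (h : T.lt y x) :
    T.ht y = @Ordinal.typein {z // T.lt z x} (fun a b => T.lt a.1 b.1) (T.wo x) ⟨y, h⟩ := by
  haveI := T.wo x
  haveI := T.wo y
  rw [← Ordinal.type_subrel]
  refine Ordinal.type_eq.2 ⟨⟨⟨fun z => ⟨⟨z.1, T.trans z.2 h⟩, z.2⟩,
    fun z => ⟨z.1.1, z.2⟩, fun z => rfl, fun z => rfl⟩, Iff.rfl⟩⟩

theorem aux_ht_lt_of_lt (T : Tree' α) {x y : α} (h : T.lt y x) : T.ht y < T.ht x := by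
  haveI := T.wo x
  rw [aux_ht_eq_typein T h]
  exact Ordinal.typein_lt_type _ _

theorem aux_exists_pred_ht (T : Tree' α) {x : α} {γ : Ordinal.{u}} (h : γ < T.ht x) :
    ∃ y, T.lt y x ∧ T.ht y = γ := by
  haveI := T.wo x
  obtain ⟨b, hb⟩ := Ordinal.typein_surj (fun a b : {z // T.lt z x} => T.lt a.1 b.1) h
  exact ⟨b.1, b.2, by rw [aux_ht_eq_typein T b.2]; exact hb⟩

end AuxStmt9

/-- Lemma 2.2: a club isomorphism carries an antichain whose set of heights is
stationary to an antichain whose set of heights is the intersection of the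
original set of heights with a club. -/
theorem stmt9 (lam : Cardinal.{u}) (hreg : lam.IsRegular) (hunc : ℵ₀ < lam)
    {α β : Type u} (T : Tree' α) (U : Tree' β)
    (hT : T.IsKTree lam) (hU : U.IsKTree lam)
    (hiso : ClubIsomorphic T U lam)
    (A : Set β) (hA : U.IsAntichain A)
    (hstat : IsStationaryIn lam.ord (U.ht '' A)) :
    ∃ C, IsClubIn lam.ord C ∧ ∃ B : Set α, T.IsAntichain B ∧
      T.ht '' B = (U.ht '' A) ∩ C := by
  obtain ⟨C, hC, f, hbij, hflt⟩ := hiso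
  have key : ∀ δ : Ordinal.{u}, ∀ x : {x : α // T.ht x ∈ C}, T.ht x.1 = δ →
      U.ht (f x).1 = δ := by
    intro δ
    induction δ using Ordinal.induction with
    | h δ IH =>
      intro x hx
      have hfwd : ∀ γ, γ ∈ C → γ < δ → γ < U.ht (f x).1 := by
        intro γ hγC hγδ
        obtain ⟨y, hyx, hyγ⟩ := aux_exists_pred_ht T (show γ < T.ht x.1 from hx ▸ hγδ)
        have hyC : T.ht y ∈ C := hyγ ▸ hγC
        have hlt : U.lt (f ⟨y, hyC⟩).1 (f x).1 := (hflt ⟨y, hyC⟩ x).1 hyx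
        have h1 : U.ht (f ⟨y, hyC⟩).1 = γ := IH γ hγδ ⟨y, hyC⟩ hyγ
        have h2 := aux_ht_lt_of_lt U hlt
        rwa [h1] at h2
      have hbwd : ∀ γ, γ ∈ C → γ < U.ht (f x).1 → γ < δ := by
        intro γ hγC hγ
        obtain ⟨z, hzfx, hzγ⟩ := aux_exists_pred_ht U hγ
        have hzC : U.ht z ∈ C := hzγ ▸ hγC
        obtain ⟨w, hw⟩ := hbij.2 ⟨z, hzC⟩
        have hwx : T.lt w.1 x.1 := by
          refine (hflt w x).2 ?_
          rw [hw]
          exact hzfx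
        have hwδ : T.ht w.1 < δ := hx ▸ aux_ht_lt_of_lt T hwx
        have h1 : U.ht (f w).1 = T.ht w.1 := IH (T.ht w.1) hwδ w rfl
        have h2 : γ = T.ht w.1 := by rw [← hzγ]; rw [hw] at h1; exact h1
        rw [h2]; exact hwδ
      have hδC : δ ∈ C := hx ▸ x.2
      have hfxC : U.ht (f x).1 ∈ C := (f x).2
      rcases lt_trichotomy (U.ht (f x).1) δ with h | h | h
      · exact absurd (hfwd _ hfxC h) (lt_irrefl _)
      · exact h
      · exact absurd (hbwd _ hδC h) (lt_irrefl _)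
  refine ⟨C, hC, {x : α | ∃ h : T.ht x ∈ C, (f ⟨x, h⟩).1 ∈ A}, ?_, ?_⟩
  · rintro x ⟨hxC, hxA⟩ y ⟨hyC, hyA⟩ hxy
    have hne : (f ⟨x, hxC⟩).1 ≠ (f ⟨y, hyC⟩).1 := by
      intro h
      exact hxy (congrArg Subtype.val (hbij.1 (Subtype.ext h)))
    have h := hA _ hxA _ hyA hne
    exact ⟨fun hl => h.1 ((hflt ⟨x, hxC⟩ ⟨y, hyC⟩).1 hl),
      fun hl => h.2 ((hflt ⟨y, hyC⟩ ⟨x, hxC⟩).1 hl)⟩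
  · ext γ
    constructor
    · rintro ⟨x, ⟨hxC, hxA⟩, rfl⟩
      exact ⟨⟨(f ⟨x, hxC⟩).1, hxA, key _ ⟨x, hxC⟩ rfl⟩, hxC⟩
    · rintro ⟨⟨z, hzA, rfl⟩, hzC⟩
      obtain ⟨w, hw⟩ := hbij.2 ⟨z, hzC⟩
      have h1 : U.ht (f w).1 = T.ht w.1 := key (T.ht w.1) w rfl
      rw [hw] at h1
      refine ⟨w.1, ⟨w.2, ?_⟩, h1.symm⟩
      show (f w).1 ∈ A
      rw [hw]
      exact hzA


end FarTrees
end

section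
/- Let λ = μ⁺ be a successor cardinal with λ regular uncountable, let T be a λ-tree, and let S ⊆ λ be a stationary set such that T↾S is special, i.e., there exists a function from T↾S to μ which is injective on chains. Then there exists an antichain A ⊆ T↾S such that {ht_T(x) : x ∈ A} is a stationary subset of S. -/
universe u

open Cardinal Set

namespace FarTrees

/-- The intersection of fewer than `λ` many clubs in `λ.ord` is a club,
for `λ` regular. -/
lemma club_iInter {lam : Cardinal.{u}} (hreg : lam.IsRegular) (hunc : ℵ₀ < lam)
    {ι : Type u} (hι : #ι < lam) (hne : Nonempty ι)
    (C : ι → Set Ordinal.{u}) (hC : ∀ i, IsClubIn lam.ord (C i)) :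
    IsClubIn lam.ord (⋂ i, C i) := by
  have hcof : lam.ord.cof = lam := hreg.cof_eq
  have hlim : Order.IsSuccLimit lam.ord := Cardinal.isSuccLimit_ord hreg.aleph0_le
  -- pick, for each `i` and `γ < λ.ord`, an element of `C i` strictly above `γ`
  have hpick : ∀ i : ι, ∀ γ : Ordinal.{u}, γ < lam.ord →
      ∃ β ∈ C i, γ < β ∧ β < lam.ord := by
    intro i γ hγ
    obtain ⟨β, hβC, hβ1, hβ2⟩ := (hC i).2.1 (γ + 1) (hlim.succ_lt hγ)
    exact ⟨β, hβC, lt_of_lt_of_le (Order.lt_succ γ) hβ1, hβ2⟩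
  classical
  set e : ι → Ordinal.{u} → Ordinal.{u} := fun i γ =>
    if h : γ < lam.ord then (hpick i γ h).choose else 0 with he
  have he1 : ∀ i γ, γ < lam.ord → e i γ ∈ C i := by
    intro i γ h; rw [he]; simp only [dif_pos h]; exact (hpick i γ h).choose_spec.1
  have he2 : ∀ i γ, γ < lam.ord → γ < e i γ := by
    intro i γ h; rw [he]; simp only [dif_pos h]; exact (hpick i γ h).choose_spec.2.1
  have he3 : ∀ i γ, γ < lam.ord → e i γ < lam.ord := by
    intro i γ h; rw [he]; simp only [dif_pos h]; exact (hpick i γ h).choose_spec.2.2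
  -- the "next" function and its iterates
  set next : Ordinal.{u} → Ordinal.{u} := fun γ => ⨆ i, e i γ with hnext
  have hnext1 : ∀ γ, γ < lam.ord → next γ < lam.ord := by
    intro γ h
    exact Ordinal.iSup_lt_ord (by rwa [hcof]) (fun i => he3 i γ h)
  have hnext2 : ∀ γ, γ < lam.ord → γ < next γ := by
    intro γ h
    obtain ⟨i⟩ := hne
    exact lt_of_lt_of_le (he2 i γ h) (Ordinal.le_iSup (fun i => e i γ) i)
  have hnext3 : ∀ i γ, γ < lam.ord → e i γ ≤ next γ :=
    fun i γ _ => Ordinal.le_iSup (fun i => e i γ) i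
  constructor
  · -- subset of Iio λ.ord
    obtain ⟨i⟩ := hne
    exact fun x hx => (hC i).1 (Set.mem_iInter.1 hx i)
  constructor
  · -- unbounded
    intro γ hγ
    set seq : ℕ → Ordinal.{u} := fun n => next^[n] γ with hseq
    have hseqlt : ∀ n, seq n < lam.ord := by
      intro n
      induction n with
      | zero => simpa [hseq] using hγ
      | succ n ih =>
        have : seq (n + 1) = next (seq n) := by
          rw [hseq]; simp [Function.iterate_succ_apply']
        rw [this]; exact hnext1 _ ih
    have hseqmono : ∀ n, seq n < seq (n + 1) := by
      intro n
      have : seq (n + 1) = next (seq n) := by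
        rw [hseq]; simp [Function.iterate_succ_apply']
      rw [this]; exact hnext2 _ (hseqlt n)
    have hseqstrict : StrictMono seq := strictMono_nat_of_lt_succ hseqmono
    set β : Ordinal.{u} := ⨆ n, seq n with hβ
    have hβlt : β < lam.ord := by
      refine Ordinal.iSup_lt_ord_lift ?_ hseqlt
      rw [hcof]
      simpa using hunc
    have hseqleβ : ∀ n, seq n ≤ β := fun n => Ordinal.le_iSup seq n
    have hseqltβ : ∀ n, seq n < β :=
      fun n => lt_of_lt_of_le (hseqmono n) (hseqleβ (n + 1))
    have hβmem : ∀ i, β ∈ C i := by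
      intro i
      refine (hC i).2.2 β hβlt ⟨?_, ?_⟩
      · exact lt_of_le_of_lt (zero_le (a := seq 0)) (hseqltβ 0)
      · intro γ' hγ'
        rw [hβ, Ordinal.lt_iSup_iff] at hγ'
        obtain ⟨n, hn⟩ := hγ'
        refine ⟨e i (seq n), he1 i _ (hseqlt n), lt_trans hn (he2 i _ (hseqlt n)), ?_⟩
        have h1 : e i (seq n) ≤ seq (n + 1) := by
          have : seq (n + 1) = next (seq n) := by
            rw [hseq]; simp [Function.iterate_succ_apply']
          rw [this]; exact hnext3 i _ (hseqlt n)
        exact lt_of_le_of_lt h1 (hseqltβ (n + 1))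
    exact ⟨β, Set.mem_iInter.2 hβmem, le_of_lt (lt_of_lt_of_le (hnext2 γ hγ)
      (by simpa [hseq, Function.iterate_one] using hseqleβ 1)), hβlt⟩
  · -- closed
    intro β hβ hacc
    refine Set.mem_iInter.2 fun i => (hC i).2.2 β hβ ⟨hacc.1, fun γ hγ => ?_⟩
    obtain ⟨c, hc, h1, h2⟩ := hacc.2 γ hγ
    exact ⟨c, Set.mem_iInter.1 hc i, h1, h2⟩

/-- If `T` is a `λ`-tree (`λ = μ⁺` regular uncountable) and `T↾S` is special
for a stationary `S ⊆ λ`, then there is an antichain of `T↾S` whose set of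
heights is a stationary subset of `S`. -/
theorem stmt15 (μ lam : Cardinal.{u}) (hlam : lam = Order.succ μ)
    (hreg : lam.IsRegular) (hunc : ℵ₀ < lam)
    {α : Type u} (T : Tree' α) (hT : T.IsKTree lam)
    (S : Set Ordinal.{u}) (hSsub : S ⊆ Iio lam.ord)
    (hstat : IsStationaryIn lam.ord S)
    (hsp : T.IsSpecialOn S μ) :
    ∃ A : Set α, (∀ x ∈ A, T.ht x ∈ S) ∧ T.IsAntichain A ∧
      IsStationaryIn lam.ord (T.ht '' A) := by
  obtain ⟨g, hg⟩ := hsp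
  have hμlt : μ < lam := hlam ▸ Order.lt_succ μ
  have hμinf : ℵ₀ ≤ μ := by
    have := hunc; rw [hlam, Order.lt_succ_iff] at this; exact this
  have hne : Nonempty μ.ord.ToType := by
    have h0 : #μ.ord.ToType ≠ 0 := by
      rw [Cardinal.mk_ord_toType]
      exact (Cardinal.aleph0_pos.trans_le hμinf).ne'
    exact Cardinal.mk_ne_zero_iff.1 h0
  have hι : #μ.ord.ToType < lam := by rw [Cardinal.mk_ord_toType]; exact hμlt
  -- fibers of the specializing function
  set A : μ.ord.ToType → Set α :=
    fun c => {x | ∃ h : T.ht x ∈ S, g ⟨x, h⟩ = c} with hA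
  have hAS : ∀ c, ∀ x ∈ A c, T.ht x ∈ S := fun c x hx => hx.1
  have hAanti : ∀ c, T.IsAntichain (A c) := by
    intro c x hx y hy hxy
    obtain ⟨hxS, hxc⟩ := hx; obtain ⟨hyS, hyc⟩ := hy
    constructor
    · intro hlt; exact hg ⟨x, hxS⟩ ⟨y, hyS⟩ hlt (hxc.trans hyc.symm)
    · intro hlt; exact hg ⟨y, hyS⟩ ⟨x, hxS⟩ hlt (hyc.trans hxc.symm)
  -- it suffices that some fiber has stationary set of heights
  suffices hs : ∃ c, IsStationaryIn lam.ord (T.ht '' A c) by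
    obtain ⟨c, hc⟩ := hs
    exact ⟨A c, hAS c, hAanti c, hc⟩
  by_contra hcon
  push_neg at hcon
  have hcon' : ∀ c, ∃ Cc, IsClubIn lam.ord Cc ∧ T.ht '' A c ∩ Cc = ∅ := by
    intro c
    have hcc := hcon c
    rw [IsStationaryIn] at hcc
    push_neg at hcc
    obtain ⟨Cc, h1, h2⟩ := hcc
    exact ⟨Cc, h1, h2⟩
  choose C hCclub hCdisj using hcon'
  have hclub : IsClubIn lam.ord (⋂ c, C c) :=
    club_iInter hreg hunc hι hne C hCclub
  obtain ⟨δ, hδS, hδC⟩ := hstat _ hclub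
  obtain ⟨x, hx⟩ := hT.2.1 δ (hSsub hδS)
  have hxS : T.ht x ∈ S := hx ▸ hδS
  set c := g ⟨x, hxS⟩ with hc
  have : δ ∈ T.ht '' A c ∩ C c := by
    refine ⟨⟨x, ⟨hxS, rfl⟩, hx⟩, ?_⟩
    exact Set.mem_iInter.1 hδC c
  rw [hCdisj c] at this
  exact this

end FarTrees
end

section
/- Let κ be a regular uncountable cardinal such that κ^{<κ} = κ, and let T be a κ⁺-tree which is R_κ-embeddable. Then the subtree T↾(κ⁺ ∩ cof(<κ)) is special, i.e., there exists a function from T↾(κ⁺ ∩ cof(<κ)) to κ which is injective on chains; in particular, T is not Suslin. -/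
universe u

open Cardinal Set

namespace FarTrees

lemma qlt_asymm {κ : Cardinal.{u}} {f g : κ.ord.ToType → Bool} (h : qlt f g) : ¬ qlt g f := by
  obtain ⟨i, hi, hlt⟩ := h
  rintro ⟨j, hj, hlt'⟩
  rcases lt_trichotomy i j with hij | rfl | hij
  · rw [hj i hij] at hlt; exact lt_irrefl _ hlt
  · exact lt_asymm hlt hlt'
  · rw [hi j hij] at hlt'; exact lt_irrefl _ hlt'

lemma qlt_trichotomy {κ : Cardinal.{u}} (f g : κ.ord.ToType → Bool) (h : f ≠ g) :
    qlt f g ∨ qlt g f := by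
  have hne : {a | f a ≠ g a}.Nonempty := by
    rw [Function.ne_iff] at h; exact h
  obtain ⟨a, ha, hmin⟩ := (wellFounded_lt (α := κ.ord.ToType)).has_min _ hne
  have hagree : ∀ j, j < a → f j = g j := fun j hj => by
    by_contra hne'; exact hmin j hne' hj
  have hfg : f a ≠ g a := ha
  cases hfa : f a <;> cases hga : g a
  · rw [hfa, hga] at hfg; exact absurd rfl hfg
  · exact Or.inl ⟨a, hagree, by rw [hfa, hga]; exact Bool.lt_iff.2 ⟨rfl, rfl⟩⟩
  · exact Or.inr ⟨a, fun j hj => (hagree j hj).symm, by rw [hfa, hga]; exact Bool.lt_iff.2 ⟨rfl, rfl⟩⟩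
  · rw [hfa, hga] at hfg; exact absurd rfl hfg

noncomputable def lubFun {κ : Cardinal.{u}} {ι : Type u} (q : ι → κ.ord.ToType → Bool) :
    κ.ord.ToType → Bool :=
  (IsWellFounded.wf (r := ((· < ·) : κ.ord.ToType → κ.ord.ToType → Prop))).fix
    (fun a rec => @decide (∃ i, (∀ b, ∀ hb : b < a, q i b = rec b hb) ∧ q i a = true)
      (Classical.propDecidable _))

lemma lubFun_eq_true_iff {κ : Cardinal.{u}} {ι : Type u} (q : ι → κ.ord.ToType → Bool)
    (a : κ.ord.ToType) :
    lubFun q a = true ↔ ∃ i, (∀ b, b < a → q i b = lubFun q b) ∧ q i a = true := by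
  have h : lubFun q a
      = @decide (∃ i, (∀ b, ∀ _hb : b < a, q i b = lubFun q b) ∧ q i a = true)
        (Classical.propDecidable _) :=
    WellFounded.fix_eq _ _ a
  rw [h]
  exact iff_of_eq (@decide_eq_true_eq _ (Classical.propDecidable _))

lemma lubFun_not_lt {κ : Cardinal.{u}} {ι : Type u} (q : ι → κ.ord.ToType → Bool) (i : ι) :
    ¬ qlt (lubFun q) (q i) := by
  rintro ⟨a, hagree, hlt⟩
  rw [Bool.lt_iff] at hlt
  obtain ⟨h1, h2⟩ := hlt
  have : lubFun q a = true :=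
    (lubFun_eq_true_iff q a).2 ⟨i, fun b hb => (hagree b hb).symm, h2⟩
  exact Bool.false_ne_true (h1.symm.trans this)

lemma lubFun_lt {κ : Cardinal.{u}} {ι : Type u} (q : ι → κ.ord.ToType → Bool)
    (y : κ.ord.ToType → Bool) (h : qlt y (lubFun q)) : ∃ i, qlt y (q i) := by
  obtain ⟨a, hagree, hlt⟩ := h
  rw [Bool.lt_iff] at hlt
  obtain ⟨h1, h2⟩ := hlt
  obtain ⟨i, hi, hia⟩ := (lubFun_eq_true_iff q a).1 h2
  exact ⟨i, a, fun j hj => (hagree j hj).trans (hi j hj).symm,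
    by rw [h1, hia]; exact Bool.lt_iff.2 ⟨rfl, rfl⟩⟩

lemma lubFun_support {κ : Cardinal.{u}} {ι : Type u} (q : ι → κ.ord.ToType → Bool)
    (a : κ.ord.ToType) (h : lubFun q a = true) : ∃ i, q i a = true :=
  ((lubFun_eq_true_iff q a).1 h).imp fun _ hi => hi.2

lemma mk_QSet_le {κ : Cardinal.{u}} (hreg : κ.IsRegular) (hpow : κ ^< κ = κ) :
    #(QSet κ) ≤ κ := by
  have hκ := hreg.aleph0_le
  set U : κ.ord.ToType → Set (κ.ord.ToType → Bool) :=
    fun b => {f | ∀ a, f a = true → a < b} with hU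
  have hsub : QSet κ ⊆ ⋃ b, U b := by
    intro q hq
    have h2 : Set.Bounded ((· < ·) : κ.ord.ToType → κ.ord.ToType → Prop) {a | q a = true} := by
      apply not_isCofinal_iff.1
      intro hc
      have := Order.cof_le hc
      rw [Ordinal.cof_toType, hreg.cof_eq] at this
      exact hq.2.not_ge this
    obtain ⟨b, hb⟩ := h2
    exact mem_iUnion.2 ⟨b, fun a ha => hb a ha⟩
  have hUb : ∀ b, #(U b) ≤ κ := by
    intro b
    have hinj : Function.Injective (fun f : U b => (fun x : Iio b => f.1 x.1)) := by
      intro f g hfg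
      apply Subtype.ext
      funext a
      by_cases hab : a < b
      · exact congrFun hfg ⟨a, hab⟩
      · have h1 : f.1 a = false := Bool.eq_false_iff.2 fun h => hab (f.2 a h)
        have h2 : g.1 a = false := Bool.eq_false_iff.2 fun h => hab (g.2 a h)
        rw [h1, h2]
    calc #(U b) ≤ #(Iio b → Bool) := mk_le_of_injective hinj
      _ = (2 : Cardinal) ^ #(Iio b) := by
          rw [Cardinal.mk_arrow]
          simp
      _ ≤ κ ^ #(Iio b) := by
          exact Cardinal.power_le_power_right ((Cardinal.nat_lt_aleph0 2).le.trans hκ)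
      _ ≤ κ ^< κ := Cardinal.le_powerlt κ (Cardinal.mk_Iio_ord_toType b)
      _ = κ := hpow
  calc #(QSet κ) ≤ #(⋃ b, U b) := mk_le_mk_of_subset hsub
    _ ≤ #(κ.ord.ToType) * ⨆ b, #(U b) := mk_iUnion_le _
    _ ≤ κ * κ := by
        rw [Cardinal.mk_toType, Cardinal.card_ord]
        exact mul_le_mul_right (ciSup_le' hUb) κ
    _ = κ := Cardinal.mul_eq_self hκ

lemma exists_sep {κ : Cardinal.{u}} (hreg : κ.IsRegular) {α : Type u} (T : Tree' α)
    {R : Type u} [LinearOrder R] {e : QSet κ → R} (hRe : IsDedekindCompletion κ R e)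
    {f : α → R} (hf : ∀ x y, T.lt x y → f x < f y) (x : α) (hcof : (T.ht x).cof < κ) :
    ∃ q : QSet κ, (∀ y, T.lt y x → f y < e q) ∧ e q ≤ f x := by
  obtain ⟨hord, hdense, hnomin, -, hlub⟩ := hRe
  by_cases hne : ∃ y, T.lt y x
  · by_cases hmax : ∃ m, T.lt m x ∧ ∀ y, T.lt y x → y ≠ m → T.lt y m
    · obtain ⟨m, hm, hmm⟩ := hmax
      obtain ⟨q, h1, h2⟩ := hdense (f m) (f x) (hf m x hm)
      refine ⟨q, fun y hy => ?_, h2.le⟩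
      by_cases hym : y = m
      · rw [hym]; exact h1
      · exact (hf y m (hmm y hy hym)).trans h1
    · push_neg at hmax
      haveI hwo := T.wo x
      have tri : ∀ a b : {y // T.lt y x}, T.lt a.1 b.1 ∨ a = b ∨ T.lt b.1 a.1 :=
        fun a b => trichotomous_of (fun a b : {y // T.lt y x} => T.lt a.1 b.1) a b
      have hsucc : ∀ m, T.lt m x → ∃ y, T.lt y x ∧ T.lt m y := by
        intro m hm
        obtain ⟨y, hy1, hy2, hy3⟩ := hmax m hm
        rcases tri ⟨y, hy1⟩ ⟨m, hm⟩ with h | h | h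
        · exact absurd h hy3
        · exact absurd (congrArg Subtype.val h) hy2
        · exact ⟨y, hy1, h⟩
      obtain ⟨y₀, hy₀⟩ := hne
      obtain ⟨s, hs⟩ := hlub (f '' {y | T.lt y x}) ⟨f y₀, ⟨y₀, hy₀, rfl⟩⟩
        ⟨f x, by rintro r ⟨y, hy, rfl⟩; exact (hf y x hy).le⟩
      have hsub : ∀ y, T.lt y x → f y ≤ s := fun y hy => hs.1 ⟨y, hy, rfl⟩
      have hslt : ∀ y, T.lt y x → f y < s := by
        intro y hy
        obtain ⟨z, hz1, hz2⟩ := hsucc y hy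
        exact (hf y z hz2).trans_le (hsub z hz1)
      have hsle : s ≤ f x := hs.2 (by rintro r ⟨y, hy, rfl⟩; exact (hf y x hy).le)
      obtain ⟨Sset, hSunb, hScard⟩ : ∃ Sset : Set {y // T.lt y x},
          (∀ a : {y // T.lt y x}, ∃ b ∈ Sset, ¬ T.lt b.1 a.1) ∧ #Sset = (T.ht x).cof := by
        classical
        letI : LinearOrder {y // T.lt y x} := linearOrderOfSTO (fun a b => T.lt a.1 b.1)
        haveI : WellFoundedLT {y // T.lt y x} := ⟨hwo.toIsWellFounded.wf⟩
        obtain ⟨S, hS, hSc⟩ := Order.exists_cof_eq {y // T.lt y x}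
        refine ⟨S, fun a => ?_, ?_⟩
        · obtain ⟨b, hb, hab⟩ := hS a
          exact ⟨b, hb, not_lt_of_ge hab⟩
        · rw [hSc, ← Ordinal.cof_type]; rfl
      have hScard' : #Sset < κ := by rw [hScard]; exact hcof
      have hsuccP : ∀ a : {y // T.lt y x}, ∃ b : {y // T.lt y x}, T.lt a.1 b.1 := by
        intro a; obtain ⟨y, hy1, hy2⟩ := hsucc a.1 a.2; exact ⟨⟨y, hy1⟩, hy2⟩
      have wf : WellFounded (fun a b : {y // T.lt y x} => T.lt a.1 b.1) :=
        hwo.toIsWellFounded.wf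
      have hσ1 : ∀ a : {y // T.lt y x}, T.lt a.1 (wf.min {b | T.lt a.1 b.1} (hsuccP a)).1 :=
        fun a => wf.min_mem {b | T.lt a.1 b.1} (hsuccP a)
      have hσ2 : ∀ a b : {y // T.lt y x}, T.lt a.1 b.1 →
          f (wf.min {b | T.lt a.1 b.1} (hsuccP a)).1 ≤ f b.1 := by
        intro a b hab
        rcases tri b (wf.min {b | T.lt a.1 b.1} (hsuccP a)) with h | h | h
        · exact (wf.not_lt_min {b | T.lt a.1 b.1} hab h).elim
        · rw [show b.1 = (wf.min {b | T.lt a.1 b.1} (hsuccP a)).1 from congrArg Subtype.val h]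
        · exact (hf _ _ h).le
      have hqa : ∀ a : Sset, ∃ q : QSet κ,
          f a.1.1 < e q ∧ e q < f (wf.min {b | T.lt a.1.1 b.1} (hsuccP a.1)).1 :=
        fun a => hdense _ _ (hf _ _ (hσ1 a.1))
      choose qa hqa1 hqa2 using hqa
      have hSne : Nonempty Sset := by
        obtain ⟨b, hb, -⟩ := hSunb ⟨y₀, hy₀⟩; exact ⟨⟨b, hb⟩⟩
      have hz1 : ∃ i, lubFun (fun a : Sset => (qa a).1) i = true := by
        by_contra hcon
        push_neg at hcon
        obtain ⟨a₀⟩ := hSne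
        apply lubFun_not_lt (fun a : Sset => (qa a).1) a₀
        show qlt (lubFun (fun a : Sset => (qa a).1)) (qa a₀).1
        have hsupp : {c | (qa a₀).1 c = true}.Nonempty := (qa a₀).2.1
        obtain ⟨δ, hδ, hδmin⟩ := (wellFounded_lt (α := κ.ord.ToType)).has_min _ hsupp
        have hδ' : (qa a₀).1 δ = true := hδ
        refine ⟨δ, fun j hj => ?_, ?_⟩
        · have hzj : lubFun (fun a : Sset => (qa a).1) j = false :=
            Bool.eq_false_iff.2 (hcon j)
          have hqj : (qa a₀).1 j = false := by
            cases hq : (qa a₀).1 j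
            · rfl
            · exact absurd hj (hδmin j hq)
          rw [hzj, hqj]
        · have hzδ : lubFun (fun a : Sset => (qa a).1) δ = false :=
            Bool.eq_false_iff.2 (hcon δ)
          rw [hzδ, hδ']
          exact Bool.lt_iff.2 ⟨rfl, rfl⟩
      have hz2 : #{i | lubFun (fun a : Sset => (qa a).1) i = true} < κ := by
        have hsub2 : {i | lubFun (fun a : Sset => (qa a).1) i = true} ⊆
            ⋃ a : Sset, {i | (qa a).1 i = true} := by
          intro i hi
          obtain ⟨a, ha⟩ := lubFun_support _ i hi
          exact mem_iUnion.2 ⟨a, ha⟩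
        calc #{i | lubFun (fun a : Sset => (qa a).1) i = true}
            ≤ #(⋃ a : Sset, {i | (qa a).1 i = true}) := mk_le_mk_of_subset hsub2
          _ ≤ #Sset * ⨆ a : Sset, #{i | (qa a).1 i = true} := mk_iUnion_le _
          _ < κ := Cardinal.mul_lt_of_lt hreg.aleph0_le hScard'
              (Cardinal.iSup_lt_of_isRegular hreg hScard' fun a => (qa a).2.2)
      have hzq : lubFun (fun a : Sset => (qa a).1) ∈ QSet κ := ⟨hz1, hz2⟩
      have hub : ∀ a : Sset, e (qa a) ≤ e ⟨_, hzq⟩ := by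
        intro a
        by_cases hzeq : (qa a).1 = lubFun (fun a : Sset => (qa a).1)
        · have heq : qa a = ⟨_, hzq⟩ := Subtype.ext hzeq
          rw [heq]
        · rcases qlt_trichotomy _ _ hzeq with h | h
          · exact ((hord (qa a) ⟨_, hzq⟩).1 h).le
          · exact absurd h (lubFun_not_lt _ a)
      have hse : s ≤ e ⟨_, hzq⟩ := by
        apply hs.2
        rintro r ⟨y, hy, rfl⟩
        obtain ⟨b, hb, hnb⟩ := hSunb ⟨y, hy⟩
        have hyb : f y ≤ f b.1 := by
          rcases tri ⟨y, hy⟩ b with h | h | h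
          · exact (hf _ _ h).le
          · rw [show y = b.1 from congrArg Subtype.val h]
          · exact absurd h hnb
        exact hyb.trans ((hqa1 ⟨b, hb⟩).le.trans (hub ⟨b, hb⟩))
      have hzle : e ⟨_, hzq⟩ ≤ f x := by
        by_contra hcon
        push_neg at hcon
        have hslt2 : s < e ⟨_, hzq⟩ := hsle.trans_lt hcon
        obtain ⟨q', hq'1, hq'2⟩ := hdense s (e ⟨_, hzq⟩) hslt2
        have hub' : ∀ a : Sset, qlt (qa a).1 q'.1 := by
          intro a
          apply (hord (qa a) q').2
          exact ((hqa2 a).trans_le (hsub _ (wf.min {b | T.lt a.1.1 b.1} (hsuccP a.1)).2)).trans hq'1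
        have hne' : q'.1 ≠ lubFun (fun a : Sset => (qa a).1) := by
          intro h
          have heq : q' = ⟨_, hzq⟩ := Subtype.ext h
          rw [heq] at hq'2; exact lt_irrefl _ hq'2
        rcases qlt_trichotomy _ _ hne' with h | h
        · obtain ⟨a, ha⟩ := lubFun_lt _ _ h
          exact qlt_asymm (hub' a) ha
        · exact absurd hq'2 (lt_asymm ((hord ⟨_, hzq⟩ q').1 h))
      exact ⟨⟨_, hzq⟩, fun y hy => (hslt y hy).trans_le hse, hzle⟩
  · push_neg at hne
    obtain ⟨b, hb⟩ := hnomin (f x)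
    obtain ⟨q, -, h2⟩ := hdense b (f x) hb
    exact ⟨q, fun y hy => absurd hy (hne y), h2.le⟩
lemma not_suslin {κ : Cardinal.{u}} (hreg : κ.IsRegular) (hunc : ℵ₀ < κ)
    {α : Type u} (T : Tree' α) (hT : T.IsKTree (Order.succ κ))
    (g : {x : α // T.ht x ∈ {δ : Ordinal.{u} | δ < (Order.succ κ).ord ∧ δ.cof < κ}} → κ.ord.ToType)
    (hg : ∀ x y : {x : α // T.ht x ∈ {δ : Ordinal.{u} | δ < (Order.succ κ).ord ∧ δ.cof < κ}},
      T.lt x.1 y.1 → g x ≠ g y) :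
    ¬ T.IsSuslin (Order.succ κ) := by
  intro hSus
  have hAle : ∀ t : κ.ord.ToType,
      #{x : α | ∃ h : T.ht x ∈ {δ : Ordinal.{u} | δ < (Order.succ κ).ord ∧ δ.cof < κ},
        g ⟨x, h⟩ = t} ≤ κ := by
    intro t
    have hac : T.IsAntichain {x : α |
        ∃ h : T.ht x ∈ {δ : Ordinal.{u} | δ < (Order.succ κ).ord ∧ δ.cof < κ}, g ⟨x, h⟩ = t} := by
      rintro x ⟨hx, hx2⟩ y ⟨hy, hy2⟩ hne
      constructor
      · intro hlt; exact hg ⟨x, hx⟩ ⟨y, hy⟩ hlt (hx2.trans hy2.symm)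
      · intro hlt; exact hg ⟨y, hy⟩ ⟨x, hx⟩ hlt (hy2.trans hx2.symm)
    exact Order.lt_succ_iff.1 (hSus.2.2 _ hac)
  have hDle : #{x : α | T.ht x ∈ {δ : Ordinal.{u} | δ < (Order.succ κ).ord ∧ δ.cof < κ}} ≤ κ := by
    calc #{x : α | T.ht x ∈ {δ : Ordinal.{u} | δ < (Order.succ κ).ord ∧ δ.cof < κ}}
        ≤ #(⋃ t : κ.ord.ToType, {x : α |
            ∃ h : T.ht x ∈ {δ : Ordinal.{u} | δ < (Order.succ κ).ord ∧ δ.cof < κ},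
              g ⟨x, h⟩ = t}) :=
        mk_le_mk_of_subset (fun x hx => mem_iUnion.2 ⟨g ⟨x, hx⟩, hx, rfl⟩)
      _ ≤ #(κ.ord.ToType) * ⨆ t, #{x : α |
            ∃ h : T.ht x ∈ {δ : Ordinal.{u} | δ < (Order.succ κ).ord ∧ δ.cof < κ},
              g ⟨x, h⟩ = t} := mk_iUnion_le _
      _ ≤ κ * κ := by
          rw [Cardinal.mk_toType, Cardinal.card_ord]
          exact mul_le_mul_right (ciSup_le' hAle) κ
      _ = κ := Cardinal.mul_eq_self hreg.aleph0_le
  have hℵ : ℵ₀ ≤ Order.succ κ := hunc.le.trans (Order.le_succ κ)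
  have hlim := Cardinal.isSuccLimit_ord hℵ
  have hδlt : ∀ t : (Order.succ κ).ord.ToType,
      (@Ordinal.typein ((Order.succ κ).ord.ToType) (· < ·) isWellOrder_lt) t + 1
        < (Order.succ κ).ord := by
    intro t
    rw [Ordinal.add_one_eq_succ]
    apply hlim.succ_lt
    have := @Ordinal.typein_lt_type ((Order.succ κ).ord.ToType) (· < ·) isWellOrder_lt t
    rwa [Ordinal.type_toType] at this
  choose xx hxx using fun t : (Order.succ κ).ord.ToType => hT.2.1 _ (hδlt t)
  have hht : ∀ t, T.ht (xx t) =
      (@Ordinal.typein ((Order.succ κ).ord.ToType) (· < ·) isWellOrder_lt) t + 1 :=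
    fun t => hxx t
  have hmem : ∀ t, xx t ∈ {x : α |
      T.ht x ∈ {δ : Ordinal.{u} | δ < (Order.succ κ).ord ∧ δ.cof < κ}} := by
    intro t
    constructor
    · rw [hht t]; exact hδlt t
    · rw [hht t, Ordinal.add_one_eq_succ, Ordinal.cof_succ]
      exact lt_of_le_of_lt (by norm_num) hunc
  have hinj : Function.Injective
      (fun t => (⟨xx t, hmem t⟩ :
        {x : α // T.ht x ∈ {δ : Ordinal.{u} | δ < (Order.succ κ).ord ∧ δ.cof < κ}})) := by
    intro t t' htt
    have h1 : xx t = xx t' := congrArg Subtype.val htt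
    have h2 := (hht t).symm.trans ((congrArg T.ht h1).trans (hht t'))
    rw [Ordinal.add_one_eq_succ, Ordinal.add_one_eq_succ] at h2
    have h4 := Order.succ_injective h2
    exact (@Ordinal.typein_injective ((Order.succ κ).ord.ToType) (· < ·) isWellOrder_lt).eq_iff.1 h4
  have hDge : Order.succ κ ≤
      #{x : α | T.ht x ∈ {δ : Ordinal.{u} | δ < (Order.succ κ).ord ∧ δ.cof < κ}} := by
    have := Cardinal.mk_le_of_injective hinj
    rwa [Cardinal.mk_toType, Cardinal.card_ord] at this
  exact absurd (hDge.trans hDle) (Order.lt_succ κ).not_ge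

/-- If `κ^{<κ} = κ` and `T` is an `R_κ`-embeddable `κ⁺`-tree then
`T↾(κ⁺ ∩ cof(<κ))` is special; in particular `T` is not Suslin. -/
theorem stmt18 (κ : Cardinal.{u}) (hreg : κ.IsRegular) (hunc : ℵ₀ < κ)
    (hpow : κ ^< κ = κ) {α : Type u} (T : Tree' α)
    (hT : T.IsKTree (Order.succ κ))
    (R : Type u) [LinearOrder R] (e : QSet κ → R)
    (hRe : IsDedekindCompletion κ R e) (hemb : T.LEmbeddable R) :
    T.IsSpecialOn {δ | δ < (Order.succ κ).ord ∧ δ.cof < κ} κ ∧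
      ¬ T.IsSuslin (Order.succ κ) := by
  obtain ⟨f, hf⟩ := hemb
  have hmk : #(QSet κ) ≤ #(κ.ord.ToType) := by
    rw [Cardinal.mk_toType, Cardinal.card_ord]
    exact mk_QSet_le hreg hpow
  obtain ⟨j⟩ := Cardinal.le_def _ _ |>.1 hmk
  have hsp : T.IsSpecialOn {δ | δ < (Order.succ κ).ord ∧ δ.cof < κ} κ := by
    choose q hq1 hq2 using
      fun x : {x : α // T.ht x ∈ {δ | δ < (Order.succ κ).ord ∧ δ.cof < κ}} =>
        exists_sep hreg T hRe hf x.1 x.2.2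
    refine ⟨fun x => j (q x), ?_⟩
    intro x y hxy heq
    have h1 : e (q x) ≤ f x.1 := hq2 x
    have h2 : f x.1 < e (q y) := hq1 y x.1 hxy
    have h3 : q x = q y := j.injective heq
    rw [h3] at h1
    exact lt_irrefl _ (h1.trans_lt h2)
  refine ⟨hsp, ?_⟩
  obtain ⟨g, hg⟩ := hsp
  exact not_suslin hreg hunc T hT g hg

end FarTrees
end

section
/- Let μ be an infinite cardinal, let λ = μ⁺, let T be a λ-tree, and let C ⊆ λ be a club such that T↾C is special, i.e., there exists a function from T↾C to μ which is injective on chains. Then T is special: there exists a function from T to μ which is injective on chains. Consequently, a special λ-tree cannot be club isomorphic to a λ-tree which is not special. -/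
universe u

open Cardinal Set

namespace FarTrees

namespace Tree'

variable {α₀ : Type u}

theorem ht_eq_typein' (T : Tree' α₀) {z x : α₀} (h : T.lt z x) :
    T.ht z = @Ordinal.typein {y // T.lt y x} (fun a b => T.lt a.1 b.1) (T.wo x) ⟨z, h⟩ := by
  letI := T.wo x
  letI := T.wo z
  rw [← Ordinal.type_subrel]
  refine Ordinal.type_eq.2 ⟨?_⟩
  exact ⟨⟨fun w => ⟨⟨w.1, T.trans w.2 h⟩, w.2⟩, fun b => ⟨b.1.1, b.2⟩,
    fun w => rfl, fun b => rfl⟩, Iff.rfl⟩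

theorem ht_lt_ht' (T : Tree' α₀) {z x : α₀} (h : T.lt z x) : T.ht z < T.ht x := by
  letI := T.wo x
  rw [T.ht_eq_typein' h]
  exact Ordinal.typein_lt_type _ _

theorem exists_pred' (T : Tree' α₀) (x : α₀) (b : Ordinal.{u}) (hb : b < T.ht x) :
    ∃ z, T.lt z x ∧ T.ht z = b := by
  letI := T.wo x
  refine ⟨(Ordinal.enum (fun a b : {y // T.lt y x} => T.lt a.1 b.1) ⟨b, hb⟩).1,
    (Ordinal.enum _ ⟨b, hb⟩).2, ?_⟩
  rw [T.ht_eq_typein' (Ordinal.enum _ ⟨b, hb⟩).2]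
  exact Ordinal.typein_enum _ _

end Tree'

theorem special_of_specialOn (μ : Cardinal.{u}) (hμ : ℵ₀ ≤ μ) {α : Type u} (T : Tree' α)
    (hT : T.IsKTree (Order.succ μ)) (C : Set Ordinal.{u})
    (hC : IsClubIn (Order.succ μ).ord C) (hsp : T.IsSpecialOn C μ) : T.IsSpecial μ := by
  classical
  obtain ⟨g, hg⟩ := hsp
  set lam := (Order.succ μ).ord with hlam
  have hlim : Order.IsSuccLimit lam := Cardinal.isSuccLimit_ord (hμ.trans (Order.le_succ μ))
  have hM : #(μ.ord.ToType) = μ := by rw [Cardinal.mk_toType, Cardinal.card_ord]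
  have hMne : Nonempty (μ.ord.ToType) := by
    rw [Ordinal.toType_nonempty_iff_ne_zero]
    simp only [ne_eq, Cardinal.ord_eq_zero]
    intro h0
    rw [h0] at hμ
    exact Cardinal.aleph0_ne_zero (le_antisymm (Cardinal.zero_le _) hμ).symm
  haveI : Inhabited (μ.ord.ToType) := Classical.inhabited_of_nonempty hMne
  set B : α → Ordinal.{u} := fun x => sSup (C ∩ Iic (T.ht x)) with hBdef
  have hBbdd : ∀ x, BddAbove (C ∩ Iic (T.ht x)) := fun x => ⟨T.ht x, fun c hc => hc.2⟩
  have hBle : ∀ x, B x ≤ T.ht x := fun x => csSup_le' (fun c hc => hc.2)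
  have hBmem : ∀ x, (C ∩ Iic (T.ht x)).Nonempty → B x ∈ C := by
    intro x hne
    by_cases h : B x ∈ C
    · exact h
    · refine hC.2.2 (B x) (lt_of_le_of_lt (hBle x) (hT.1 x)) ⟨?_, ?_⟩
      · obtain ⟨c, hc⟩ := hne
        rcases (le_csSup (hBbdd x) hc).lt_or_eq with h2 | h2
        · exact lt_of_le_of_lt (zero_le : 0 ≤ c) h2
        · exact absurd ((show c = B x from h2) ▸ hc.1) h
      · intro γ hγ
        obtain ⟨c, hc, hγc⟩ := exists_lt_of_lt_csSup hne hγ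
        rcases (le_csSup (hBbdd x) hc).lt_or_eq with h2 | h2
        · exact ⟨c, hc.1, hγc, h2⟩
        · exact absurd ((show c = B x from h2) ▸ hc.1) h
  have hBmono : ∀ x y : α, T.ht x ≤ T.ht y → B x ≤ B y := by
    intro x y hxy
    rcases (C ∩ Iic (T.ht x)).eq_empty_or_nonempty with h | h
    · show sSup (C ∩ Iic (T.ht x)) ≤ _
      rw [h, csSup_empty]
      exact zero_le
    · exact csSup_le_csSup (hBbdd y) h (fun c hc => ⟨hc.1, hc.2.trans hxy⟩)
  -- injections on each "gap"
  have hE : ∀ b : Ordinal.{u}, ∃ F : Ordinal.{u} → μ.ord.ToType,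
      ∀ d1, d1 < lam → sSup (C ∩ Iic d1) = b →
      ∀ d2, d2 < lam → sSup (C ∩ Iic d2) = b → F d1 = F d2 → d1 = d2 := by
    intro b
    by_cases hb : b < lam
    · obtain ⟨b', hb'C, hb'ge, hb'lt⟩ := hC.2.1 (b + 1) (hlim.succ_lt hb)
      have hbb' : b < b' := lt_of_lt_of_le (by rw [Ordinal.add_one_eq_succ]; exact Order.lt_succ b) hb'ge
      have hcard : #(b'.ToType) ≤ #(μ.ord.ToType) := by
        rw [hM, Cardinal.mk_toType]
        exact Order.lt_succ_iff.1 (Cardinal.lt_ord.1 hb'lt)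
      obtain ⟨emb⟩ := (Cardinal.le_def _ _).1 hcard
      have key : ∀ d, d < lam → sSup (C ∩ Iic d) = b → d < b' := by
        intro d hd hsup
        by_contra hcon
        push_neg at hcon
        have : b' ≤ b := hsup ▸ le_csSup ⟨d, fun c hc => hc.2⟩ ⟨hb'C, hcon⟩
        exact absurd this (not_le.2 hbb')
      refine ⟨fun d => if h : d < b' then emb ((Ordinal.ToType.mk (o := b')) ⟨d, h⟩)
        else Classical.arbitrary _, ?_⟩
      intro d1 h1 hs1 d2 h2 hs2 heq
      simp only [dif_pos (key d1 h1 hs1), dif_pos (key d2 h2 hs2)] at heq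
      have h3 := (Ordinal.ToType.mk (o := b')).injective (emb.injective heq)
      exact congrArg Subtype.val h3
    · refine ⟨fun _ => Classical.arbitrary _, ?_⟩
      intro d1 h1 hs1 d2 h2 hs2 heq
      exfalso
      have : b ≤ d1 := hs1 ▸ csSup_le' (fun c hc => hc.2)
      exact hb (lt_of_le_of_lt this h1)
  choose E hEspec using hE
  -- predecessors
  have hpred : ∀ x : α, ∀ b : Ordinal.{u}, b < T.ht x → ∃ z, T.lt z x ∧ T.ht z = b :=
    fun x b hb => T.exists_pred' x b hb
  choose! p hp1 hp2 using hpred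
  have hkey : ∀ x, B x ∈ C → B x < T.ht x → T.ht (p x (B x)) ∈ C := by
    intro x h1 h2; rw [hp2 x (B x) h2]; exact h1
  set FC : α → Option (μ.ord.ToType) := fun x =>
    if h : B x ∈ C ∧ B x < T.ht x then some (g ⟨p x (B x), hkey x h.1 h.2⟩) else none with hFC
  set h0 : α → (Option (μ.ord.ToType) × μ.ord.ToType) ⊕ μ.ord.ToType := fun x =>
    if hx : T.ht x ∈ C then Sum.inr (g ⟨x, hx⟩)
    else Sum.inl (FC x, E (B x) (T.ht x)) with hh0
  have hembx : #((Option (μ.ord.ToType) × μ.ord.ToType) ⊕ μ.ord.ToType) ≤ #(μ.ord.ToType) := by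
    simp only [Cardinal.mk_sum, Cardinal.mk_prod, Cardinal.mk_option, Cardinal.lift_id, hM]
    rw [Cardinal.add_one_eq hμ, Cardinal.mul_eq_self hμ, Cardinal.add_eq_self hμ]
  obtain ⟨emb2⟩ := (Cardinal.le_def _ _).1 hembx
  refine ⟨fun x => emb2 (h0 x), ?_⟩
  intro x y hxy heq
  have hh : h0 x = h0 y := emb2.injective heq
  have hht : T.ht x < T.ht y := T.ht_lt_ht' hxy
  rw [hh0] at hh
  simp only at hh
  by_cases hx : T.ht x ∈ C <;> by_cases hy : T.ht y ∈ C
  · rw [dif_pos hx, dif_pos hy] at hh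
    exact hg ⟨x, hx⟩ ⟨y, hy⟩ hxy (Sum.inr.inj hh)
  · rw [dif_pos hx, dif_neg hy] at hh
    exact Sum.inr_ne_inl hh
  · rw [dif_neg hx, dif_pos hy] at hh
    exact Sum.inl_ne_inr hh
  · rw [dif_neg hx, dif_neg hy] at hh
    have hh' := Sum.inl.inj hh
    have hfc : FC x = FC y := congrArg Prod.fst hh'
    have hE2 : E (B x) (T.ht x) = E (B y) (T.ht y) := congrArg Prod.snd hh'
    by_cases hB : B x = B y
    · have heq2 : T.ht x = T.ht y := by
        refine hEspec (B x) (T.ht x) (hT.1 x) rfl (T.ht y) (hT.1 y) hB.symm ?_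
        rw [hE2, hB]
      exact absurd heq2 hht.ne
    · have hBlt : B x < B y := (hBmono x y hht.le).lt_of_ne hB
      have hynse : (C ∩ Iic (T.ht y)).Nonempty := by
        by_contra hemp
        rw [not_nonempty_iff_eq_empty] at hemp
        have hzero : B y = 0 := by
          show sSup (C ∩ Iic (T.ht y)) = 0
          rw [hemp, csSup_empty]
          rfl
        rw [hzero] at hBlt
        exact not_lt_zero' hBlt
      have hyC : B y ∈ C := hBmem y hynse
      have hylt : B y < T.ht y := lt_of_le_of_ne (hBle y) (fun hz => hy (hz ▸ hyC))
      rw [hFC] at hfc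
      simp only at hfc
      by_cases hBx : B x ∈ C ∧ B x < T.ht x
      · rw [dif_pos hBx, dif_pos (show B y ∈ C ∧ B y < T.ht y from ⟨hyC, hylt⟩)] at hfc
        have hfc' := Option.some.inj hfc
        have h1 : T.lt (p x (B x)) y := T.trans (hp1 x (B x) hBx.2) hxy
        have h2 : T.lt (p y (B y)) y := hp1 y (B y) hylt
        have hhts : T.ht (p x (B x)) < T.ht (p y (B y)) := by
          rw [hp2 x _ hBx.2, hp2 y _ hylt]; exact hBlt
        letI := T.wo y
        rcases trichotomous_of (fun a b : {z // T.lt z y} => T.lt a.1 b.1)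
            ⟨p x (B x), h1⟩ ⟨p y (B y), h2⟩ with h3 | h3 | h3
        · exact hg _ _ h3 hfc'
        · have hv := congrArg Subtype.val h3
          simp only at hv
          rw [hv] at hhts
          exact lt_irrefl _ hhts
        · exact lt_irrefl _ (hhts.trans (T.ht_lt_ht' h3))
      · rw [dif_neg hBx, dif_pos (show B y ∈ C ∧ B y < T.ht y from ⟨hyC, hylt⟩)] at hfc
        exact Option.some_ne_none _ hfc.symm

/-- If a `μ⁺`-tree is special on a club of levels then it is special;
consequently a special `μ⁺`-tree cannot be club isomorphic to a non-special
one. -/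
theorem stmt19 (μ : Cardinal.{u}) (hμ : ℵ₀ ≤ μ) {α : Type u} (T : Tree' α)
    (hT : T.IsKTree (Order.succ μ)) (C : Set Ordinal.{u})
    (hC : IsClubIn (Order.succ μ).ord C) (hsp : T.IsSpecialOn C μ) :
    T.IsSpecial μ ∧
    ∀ (β γ : Type u) (T' : Tree' β) (U' : Tree' γ),
      T'.IsKTree (Order.succ μ) → U'.IsKTree (Order.succ μ) →
      T'.IsSpecial μ → ¬ U'.IsSpecial μ →
      ¬ ClubIsomorphic T' U' (Order.succ μ) := by
  constructor
  · exact special_of_specialOn μ hμ T hT C hC hsp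
  · intro β γ T' U' hT' hU' hTs hUns hCI
    obtain ⟨C', hC', f, hfbij, hfiff⟩ := hCI
    apply hUns
    obtain ⟨g0, hg0⟩ := hTs
    refine special_of_specialOn μ hμ U' hU' C' hC' ?_
    set e := Equiv.ofBijective f hfbij with he
    refine ⟨fun y => g0 (e.symm y).1, ?_⟩
    intro y1 y2 hlt hgeq
    have h1 : (f (e.symm y1)).1 = y1.1 := by rw [show f (e.symm y1) = y1 from e.apply_symm_apply y1]
    have h2 : (f (e.symm y2)).1 = y2.1 := by rw [show f (e.symm y2) = y2 from e.apply_symm_apply y2]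
    have hlt' : T'.lt (e.symm y1).1 (e.symm y2).1 := by
      rw [hfiff, h1, h2]
      exact hlt
    exact hg0 _ _ hlt' hgeq


end FarTrees
end
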